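/- Let G be a finite p-group. Then G is minimal non-abelian (i.e., G is non-abelian but every proper subgroup of G is abelian) if and only if G can be generated by two elements and the commutator subgroup G' has order p. -/

import Mathlib

/-- `G` is a minimal non-abelian group: non-abelian, but all proper subgroups abelian. -/
def IsMinimalNonabelian (G : Type*) [Group G] : Prop :=
  (¬ ∀ a b : G, a * b = b * a) ∧
    ∀ H : Subgroup G, H ≠ ⊤ → ∀ a ∈ H, ∀ b ∈ H, a * b = b * a

/-- `G` is an `𝒜_t`-group: it has a non-abelian subgroup of index `p ^ (t-1)`,
but all subgroups of index `p ^ t` are abelian. -/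
def IsAGroup (p t : ℕ) (G : Type*) [Group G] : Prop :=
  (∃ H : Subgroup G, H.index = p ^ (t - 1) ∧ ¬ ∀ a ∈ H, ∀ b ∈ H, a * b = b * a) ∧
    ∀ H : Subgroup G, H.index = p ^ t → ∀ a ∈ H, ∀ b ∈ H, a * b = b * a


open Subgroup
open scoped commutatorElement

section MNAHelpers

variable {G : Type*} [Group G]

private lemma my_normal_of_le_center {K : Subgroup G} (h : K ≤ Subgroup.center G) :
    K.Normal := by
  constructor
  intro n hn g
  have hc := Subgroup.mem_center_iff.mp (h hn) g
  have : g * n * g⁻¹ = n := by rw [hc, mul_assoc, mul_inv_cancel, mul_one]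
  rwa [this]

private lemma my_conj_pow_eq {g x c : G} (hc : ∀ w : G, c * w = w * c)
    (h : g * x * g⁻¹ = c * x) (n : ℕ) : g ^ n * x * (g ^ n)⁻¹ = c ^ n * x := by
  induction n with
  | zero => simp
  | succ n ih =>
    have hcomm : Commute c g := hc g
    have hcn : c ^ n * g = g * c ^ n := (hcomm.pow_left n).eq
    have h1 : g ^ (n + 1) * x * (g ^ (n + 1))⁻¹ = g * (g ^ n * x * (g ^ n)⁻¹) * g⁻¹ := by
      rw [pow_succ']; group
    have h2 : g * (c ^ n * x) * g⁻¹ = c ^ n * (g * x * g⁻¹) := by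
      calc g * (c ^ n * x) * g⁻¹ = g * c ^ n * x * g⁻¹ := by group
        _ = c ^ n * g * x * g⁻¹ := by rw [← hcn]
        _ = c ^ n * (g * x * g⁻¹) := by group
    rw [h1, ih, h2, h, ← mul_assoc, ← pow_succ]

private lemma my_zmod_pow_pow {p : ℕ} [Fact p.Prime] (x : ZMod p) (n : ℕ) :
    x ^ (p ^ n) = x := by
  induction n with
  | zero => simp
  | succ n ih => rw [pow_succ, pow_mul, ih, ZMod.pow_card]

private lemma my_closure_pair_map_top {H : Type*} [Group H] {a b : G}
    (hgen : Subgroup.closure {a, b} = ⊤) (f : G →* H) (hf : Function.Surjective f) :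
    Subgroup.closure {f a, f b} = ⊤ := by
  rw [← Set.image_pair, ← MonoidHom.map_closure, hgen]
  rw [← MonoidHom.range_eq_map]
  exact f.range_eq_top_of_surjective hf

private lemma my_coatom_normal {p : ℕ} [Fact p.Prime] [Finite G] (hG : IsPGroup p G)
    {M : Subgroup G} (hM : IsCoatom M) : M.Normal := by
  haveI : Group.IsNilpotent G := hG.isNilpotent
  exact Subgroup.NormalizerCondition.normal_of_coatom M normalizerCondition_of_isNilpotent hM

private lemma my_coatom_index {p : ℕ} [Fact p.Prime] [Finite G] (hG : IsPGroup p G)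
    {M : Subgroup G} (hM : IsCoatom M) [M.Normal] : M.index = p := by
  have hQ : IsPGroup p (G ⧸ M) := hG.to_quotient M
  have hne1 : M.index ≠ 1 := by
    intro h
    exact hM.1 (Subgroup.index_eq_one.mp h)
  obtain ⟨n, hn⟩ := IsPGroup.iff_card.mp hQ
  have hdvd : p ∣ Nat.card (G ⧸ M) := by
    rcases n with _ | n
    · exfalso
      apply hne1
      rw [Subgroup.index_eq_card, hn, pow_zero]
    · rw [hn]
      exact dvd_pow_self p n.succ_ne_zero
  obtain ⟨y, hy⟩ := exists_prime_orderOf_dvd_card' p hdvd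
  have hy1 : y ≠ 1 := by
    intro h
    rw [h, orderOf_one] at hy
    exact (Fact.out : p.Prime).one_lt.ne' hy.symm
  obtain ⟨g, hg⟩ := QuotientGroup.mk'_surjective M y
  set P := Subgroup.comap (QuotientGroup.mk' M) (Subgroup.zpowers y) with hP
  have hMP : M ≤ P := by
    intro m hm
    have h1 : QuotientGroup.mk' M m = 1 := by
      rw [← MonoidHom.mem_ker, QuotientGroup.ker_mk']
      exact hm
    rw [hP, Subgroup.mem_comap, h1]
    exact Subgroup.one_mem _
  have hlt : M < P := lt_of_le_of_ne hMP (by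
    intro hMP'
    have hgP : g ∈ P := by
      rw [hP, Subgroup.mem_comap, hg]
      exact Subgroup.mem_zpowers y
    rw [← hMP'] at hgP
    have h1 : QuotientGroup.mk' M g = 1 := by
      rw [← MonoidHom.mem_ker, QuotientGroup.ker_mk']
      exact hgP
    exact hy1 (by rw [← hg, h1]))
  have hPtop : P = ⊤ := hM.2 P hlt
  have htop : Subgroup.zpowers y = ⊤ := by
    rw [eq_top_iff]
    intro u _
    obtain ⟨g', hg'⟩ := QuotientGroup.mk'_surjective M u
    have hgP : g' ∈ P := hPtop ▸ Subgroup.mem_top g'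
    rw [hP, Subgroup.mem_comap, hg'] at hgP
    exact hgP
  have hcard : Nat.card (G ⧸ M) = p := by
    calc Nat.card (G ⧸ M) = Nat.card (⊤ : Subgroup (G ⧸ M)) := Subgroup.card_top.symm
      _ = Nat.card (Subgroup.zpowers y) := by rw [htop]
      _ = orderOf y := Nat.card_zpowers y
      _ = p := hy
  rw [Subgroup.index_eq_card, hcard]

private lemma my_commutator_le_center {p : ℕ} [Fact p.Prime] [Finite G] (hG : IsPGroup p G)
    (hcard : Nat.card (commutator G) = p) : commutator G ≤ Subgroup.center G := by
  have hp : p.Prime := Fact.out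
  intro x hx
  rcases eq_or_ne x 1 with rfl | hx1
  · exact (Subgroup.center G).one_mem
  rw [Subgroup.mem_center_iff]
  intro g
  have hox : orderOf x = p := by
    have h1 : orderOf x ∣ p := by
      have h2 := orderOf_dvd_natCard (⟨x, hx⟩ : commutator G)
      rw [hcard, Subgroup.orderOf_mk] at h2
      exact h2
    exact (hp.eq_one_or_self_of_dvd _ h1).resolve_left
      (by simpa [orderOf_eq_one_iff] using hx1)
  have hconj : g * x * g⁻¹ ∈ commutator G :=
    Subgroup.Normal.conj_mem inferInstance x hx g
  have hzp : Subgroup.zpowers x = commutator G := by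
    apply Subgroup.eq_of_le_of_card_ge (Subgroup.zpowers_le.mpr hx)
    rw [hcard, Nat.card_zpowers, hox]
  rw [← hzp] at hconj
  obtain ⟨k, hk⟩ := Subgroup.mem_zpowers_iff.mp hconj
  have conj_zpow : ∀ (w : G) (m : ℤ), g * w ^ m * g⁻¹ = (g * w * g⁻¹) ^ m := by
    intro w m
    have := map_zpow (MulAut.conj g).toMonoidHom w m
    simpa [MulAut.conj_apply] using this
  have hiter : ∀ j : ℕ, g ^ j * x * (g ^ j)⁻¹ = x ^ (k ^ j) := by
    intro j
    induction j with
    | zero => simp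
    | succ j ih =>
      have h1 : g ^ (j + 1) * x * (g ^ (j + 1))⁻¹ = g * (g ^ j * x * (g ^ j)⁻¹) * g⁻¹ := by
        rw [pow_succ']; group
      rw [h1, ih, conj_zpow, ← hk, ← zpow_mul, pow_succ']
  obtain ⟨n, hn⟩ := IsPGroup.iff_card.mp hG
  have h1 : x ^ (k ^ Nat.card G) = x := by
    have h2 := hiter (Nat.card G)
    rw [pow_card_eq_one'] at h2
    simpa using h2.symm
  have h2 : x ^ ((k : ℤ) ^ Nat.card G - 1) = 1 := by
    rw [zpow_sub, zpow_one, h1]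
    simp
  have h3 : (p : ℤ) ∣ k ^ Nat.card G - 1 := by
    have := orderOf_dvd_iff_zpow_eq_one.mpr h2
    rwa [hox] at this
  have h4 : ((k : ZMod p)) ^ Nat.card G = 1 := by
    have h5 : (((k ^ Nat.card G - 1 : ℤ)) : ZMod p) = 0 :=
      (ZMod.intCast_zmod_eq_zero_iff_dvd _ p).mpr h3
    push_cast at h5
    linear_combination h5
  have h5 : (k : ZMod p) = 1 := by
    rw [hn] at h4
    rw [← my_zmod_pow_pow (k : ZMod p) n, h4]
  have h6 : (p : ℤ) ∣ k - 1 := by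
    have h7 : ((k - 1 : ℤ) : ZMod p) = 0 := by push_cast [h5]; ring
    exact (ZMod.intCast_zmod_eq_zero_iff_dvd _ p).mp h7
  have h7 : x ^ (k - 1) = 1 := by
    apply orderOf_dvd_iff_zpow_eq_one.mp
    rwa [hox]
  have h8 : g * x * g⁻¹ = x := by
    rw [← hk]
    calc x ^ k = x ^ (k - 1) * x ^ (1 : ℤ) := by rw [← zpow_add]; ring_nf
      _ = x := by rw [h7, one_mul, zpow_one]
  calc g * x = g * x * g⁻¹ * g := by group
    _ = x * g := by rw [h8]

private lemma my_pow_p_mem_center {p : ℕ} [Fact p.Prime] [Finite G] (hG : IsPGroup p G)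
    (hcard : Nat.card (commutator G) = p) (g : G) : g ^ p ∈ Subgroup.center G := by
  rw [Subgroup.mem_center_iff]
  intro x
  set c := ⁅g, x⁆ with hcdef
  have hcmem : c ∈ commutator G := by
    rw [commutator_def]
    exact Subgroup.commutator_mem_commutator (Subgroup.mem_top g) (Subgroup.mem_top x)
  have hcZ : c ∈ Subgroup.center G := my_commutator_le_center hG hcard hcmem
  have hc : ∀ w : G, c * w = w * c := fun w => (Subgroup.mem_center_iff.mp hcZ w).symm
  have hcp : c ^ p = 1 := by
    apply orderOf_dvd_iff_pow_eq_one.mp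
    have h2 := orderOf_dvd_natCard (⟨c, hcmem⟩ : commutator G)
    rw [hcard, Subgroup.orderOf_mk] at h2
    exact h2
  have hconj : g * x * g⁻¹ = c * x := by
    rw [hcdef, commutatorElement_def, inv_mul_cancel_right]
  have h1 := my_conj_pow_eq hc hconj p
  rw [hcp, one_mul] at h1
  exact (mul_inv_eq_iff_eq_mul.mp h1).symm

private lemma my_quotient_comm {a b : G} (hgen : Subgroup.closure {a, b} = ⊤)
    {L : Subgroup G} [L.Normal] (hab : ⁅a, b⁆ ∈ L) (x y : G) : ⁅x, y⁆ ∈ L := by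
  set q := QuotientGroup.mk' L with hq
  have hqsurj := QuotientGroup.mk'_surjective L
  have hqgen : Subgroup.closure {q a, q b} = (⊤ : Subgroup (G ⧸ L)) :=
    my_closure_pair_map_top hgen q hqsurj
  have hcab : q a * q b = q b * q a := by
    have h1 : q ⁅a, b⁆ = 1 := by
      have h0 : ⁅a, b⁆ ∈ q.ker := by rw [hq, QuotientGroup.ker_mk']; exact hab
      exact MonoidHom.mem_ker.mp h0
    rw [map_commutatorElement] at h1
    exact (commutatorElement_eq_one_iff_commute.mp h1).eq
  have hcenter : ∀ u : G ⧸ L, u ∈ Subgroup.center (G ⧸ L) := by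
    have hmemc : ∀ w : G ⧸ L, (∀ v : G ⧸ L, w * v = v * w) → w ∈ Subgroup.center (G ⧸ L) := by
      intro w hw
      rw [Subgroup.mem_center_iff]
      intro v
      exact (hw v).symm
    have hcent1 : ∀ w ∈ ({q a, q b} : Set (G ⧸ L)), ∀ v : G ⧸ L, w * v = v * w := by
      intro w hw
      have hcw : ∀ w₀ : G ⧸ L, (w₀ = q a ∨ w₀ = q b) →
          Subgroup.closure {q a, q b} ≤ Subgroup.centralizer {w₀} := by
        rintro w₀ hw₀
        rw [Subgroup.closure_le]
        intro u hu
        simp only [Set.mem_insert_iff, Set.mem_singleton_iff] at hu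
        rw [SetLike.mem_coe, Subgroup.mem_centralizer_iff]
        intro h hh
        rw [Set.mem_singleton_iff] at hh
        subst hh
        rcases hw₀ with rfl | rfl <;> rcases hu with rfl | rfl
        · rfl
        · exact hcab
        · exact hcab.symm
        · rfl
      simp only [Set.mem_insert_iff, Set.mem_singleton_iff] at hw
      intro v
      have hv : v ∈ Subgroup.centralizer {w} := by
        apply hcw w hw
        rw [hqgen]
        exact Subgroup.mem_top v
      exact Subgroup.mem_centralizer_iff.mp hv w (Set.mem_singleton w)
    intro u
    have : Subgroup.closure {q a, q b} ≤ Subgroup.center (G ⧸ L) := by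
      rw [Subgroup.closure_le]
      intro w hw
      exact hmemc w (hcent1 w hw)
    apply this
    rw [hqgen]
    exact Subgroup.mem_top u
  have h1 : q ⁅x, y⁆ = 1 := by
    rw [map_commutatorElement]
    apply commutatorElement_eq_one_iff_commute.mpr
    have := Subgroup.mem_center_iff.mp (hcenter (q x)) (q y)
    exact this.symm
  have h2 : ⁅x, y⁆ ∈ q.ker := MonoidHom.mem_ker.mpr h1
  rwa [hq, QuotientGroup.ker_mk'] at h2

private lemma my_card_le_sq {Q : Type*} [Group Q] {p : ℕ} (hp : 0 < p) {α β : Q}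
    (hgen : Subgroup.closure {α, β} = ⊤) (hcomm : α * β = β * α)
    (hα : α ^ p = 1) (hβ : β ^ p = 1) : Nat.card Q ≤ p ^ 2 := by
  have hC : Commute α β := hcomm
  have hred : ∀ (γ : Q), γ ^ p = 1 → ∀ i : ℕ, γ ^ i = γ ^ (i % p) := by
    intro γ h i
    conv_lhs => rw [← Nat.div_add_mod i p]
    rw [pow_add, pow_mul, h, one_pow, one_mul]
  let W : Subgroup Q :=
    { carrier := {u : Q | ∃ i j : ℕ, u = α ^ i * β ^ j}
      one_mem' := ⟨0, 0, by simp⟩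
      mul_mem' := by
        rintro u v ⟨i, j, rfl⟩ ⟨k, l, rfl⟩
        refine ⟨i + k, j + l, ?_⟩
        have h1 : β ^ j * α ^ k = α ^ k * β ^ j := (hC.symm.pow_pow j k).eq
        calc α ^ i * β ^ j * (α ^ k * β ^ l)
            = α ^ i * (β ^ j * α ^ k) * β ^ l := by group
          _ = α ^ i * (α ^ k * β ^ j) * β ^ l := by rw [h1]
          _ = α ^ (i + k) * β ^ (j + l) := by rw [pow_add, pow_add]; group
      inv_mem' := by
        rintro u ⟨i, j, rfl⟩
        refine ⟨i * (p - 1), j * (p - 1), ?_⟩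
        have hαi : α ^ (i * (p - 1)) * α ^ i = 1 := by
          rw [← pow_add]
          have h9 : p - 1 + 1 = p := Nat.succ_pred_eq_of_pos hp
          have : i * (p - 1) + i = i * p := by
            calc i * (p - 1) + i = i * (p - 1 + 1) := by ring
              _ = i * p := by rw [h9]
          rw [this, mul_comm, pow_mul, hα, one_pow]
        have hβj : β ^ (j * (p - 1)) * β ^ j = 1 := by
          rw [← pow_add]
          have h9 : p - 1 + 1 = p := Nat.succ_pred_eq_of_pos hp
          have : j * (p - 1) + j = j * p := by
            calc j * (p - 1) + j = j * (p - 1 + 1) := by ring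
              _ = j * p := by rw [h9]
          rw [this, mul_comm, pow_mul, hβ, one_pow]
        rw [eq_comm, eq_inv_iff_mul_eq_one]
        calc α ^ (i * (p - 1)) * β ^ (j * (p - 1)) * (α ^ i * β ^ j)
            = α ^ (i * (p - 1)) * (β ^ (j * (p - 1)) * α ^ i) * β ^ j := by group
          _ = α ^ (i * (p - 1)) * (α ^ i * β ^ (j * (p - 1))) * β ^ j := by
              rw [(hC.symm.pow_pow _ _).eq]
          _ = (α ^ (i * (p - 1)) * α ^ i) * (β ^ (j * (p - 1)) * β ^ j) := by group
          _ = 1 := by rw [hαi, hβj, one_mul] }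
  have hWtop : ∀ u : Q, ∃ i j : ℕ, u = α ^ i * β ^ j := by
    intro u
    have hle : Subgroup.closure {α, β} ≤ W := by
      rw [Subgroup.closure_le]
      intro w hw
      simp only [Set.mem_insert_iff, Set.mem_singleton_iff] at hw
      rcases hw with rfl | rfl
      · exact ⟨1, 0, by simp⟩
      · exact ⟨0, 1, by simp⟩
    exact hle (hgen ▸ Subgroup.mem_top u)
  have hsurj : Function.Surjective
      (fun ij : Fin p × Fin p => α ^ (ij.1 : ℕ) * β ^ (ij.2 : ℕ)) := by
    intro u
    obtain ⟨i, j, rfl⟩ := hWtop u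
    refine ⟨(⟨i % p, Nat.mod_lt _ hp⟩, ⟨j % p, Nat.mod_lt _ hp⟩), ?_⟩
    simp only
    rw [← hred α hα i, ← hred β hβ j]
  have h1 := Nat.card_le_card_of_surjective _ hsurj
  have h2 : Nat.card (Fin p × Fin p) = p ^ 2 := by
    simp [Nat.card_eq_fintype_card, sq]
  rw [h2] at h1
  exact h1

private lemma my_index_le_sq {p : ℕ} (hp : 0 < p) {a b : G}
    (hgen : Subgroup.closure {a, b} = ⊤) {L : Subgroup G} [L.Normal]
    (hab : ⁅a, b⁆ ∈ L) (ha : a ^ p ∈ L) (hb : b ^ p ∈ L) : L.index ≤ p ^ 2 := by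
  set q := QuotientGroup.mk' L with hq
  have hqsurj := QuotientGroup.mk'_surjective L
  have hone : ∀ w : G, w ∈ L → q w = 1 := by
    intro w hw
    have h0 : w ∈ q.ker := by rw [hq, QuotientGroup.ker_mk']; exact hw
    exact MonoidHom.mem_ker.mp h0
  have hcomm : q a * q b = q b * q a := by
    have h1 : q ⁅a, b⁆ = 1 := hone _ hab
    rw [map_commutatorElement] at h1
    exact (commutatorElement_eq_one_iff_commute.mp h1).eq
  have hα : (q a) ^ p = 1 := by rw [← map_pow]; exact hone _ ha
  have hβ : (q b) ^ p = 1 := by rw [← map_pow]; exact hone _ hb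
  rw [Subgroup.index_eq_card]
  exact my_card_le_sq hp (my_closure_pair_map_top hgen q hqsurj) hcomm hα hβ

end MNAHelpers

theorem stmt0 {p : ℕ} (hp : p.Prime) {G : Type*} [Group G] [Finite G]
    (hG : IsPGroup p G) :
    IsMinimalNonabelian G ↔
      (∃ a b : G, Subgroup.closure {a, b} = ⊤) ∧ Nat.card (commutator G) = p := by
  haveI : Fact p.Prime := ⟨hp⟩
  constructor
  · rintro ⟨h1, h2⟩
    obtain ⟨a, ha⟩ := not_forall.mp h1
    obtain ⟨b, hab⟩ := not_forall.mp ha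
    have hgen : Subgroup.closure {a, b} = ⊤ := by
      by_contra hne
      exact hab (h2 _ hne a (Subgroup.subset_closure (by simp)) b
        (Subgroup.subset_closure (by simp)))
    refine ⟨⟨a, b, hgen⟩, ?_⟩
    have coatom_centralizer : ∀ x y : G, x * y ≠ y * x → IsCoatom (Subgroup.centralizer {x}) := by
      intro x y hxy
      constructor
      · intro htop
        apply hxy
        have hmem : y ∈ Subgroup.centralizer {x} := htop ▸ Subgroup.mem_top y
        exact Subgroup.mem_centralizer_iff.mp hmem x (Set.mem_singleton x)
      · intro K hK
        by_contra hKtop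
        have hcomm := h2 K hKtop
        have hxK : x ∈ K := hK.le (Subgroup.mem_centralizer_iff.mpr
          (by rintro h hh; rw [Set.mem_singleton_iff] at hh; subst hh; rfl))
        have hle : K ≤ Subgroup.centralizer {x} := by
          intro k hk
          rw [Subgroup.mem_centralizer_iff]
          rintro h hh
          rw [Set.mem_singleton_iff] at hh
          subst hh
          exact hcomm h hxK k hk
        exact absurd (hK.trans_le hle) (lt_irrefl _)
    set M := Subgroup.centralizer ({a} : Set G) with hM
    set N := Subgroup.centralizer ({b} : Set G) with hN
    have hMco : IsCoatom M := coatom_centralizer a b hab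
    have hNco : IsCoatom N := coatom_centralizer b a (fun h => hab h.symm)
    haveI hMn : M.Normal := my_coatom_normal hG hMco
    haveI hNn : N.Normal := my_coatom_normal hG hNco
    have hNidx : N.index = p := my_coatom_index hG hNco
    set c := ⁅a, b⁆ with hc
    have haM : a ∈ M := Subgroup.mem_centralizer_iff.mpr
      (by rintro h hh; rw [Set.mem_singleton_iff] at hh; subst hh; rfl)
    have hbN : b ∈ N := Subgroup.mem_centralizer_iff.mpr
      (by rintro h hh; rw [Set.mem_singleton_iff] at hh; subst hh; rfl)
    have hcM : c ∈ M := by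
      have h1 : b * a⁻¹ * b⁻¹ ∈ M := hMn.conj_mem a⁻¹ (M.inv_mem haM) b
      have h2' : c = a * (b * a⁻¹ * b⁻¹) := by rw [hc, commutatorElement_def]; group
      rw [h2']
      exact M.mul_mem haM h1
    have hcN : c ∈ N := by
      have h1 : a * b * a⁻¹ ∈ N := hNn.conj_mem b hbN a
      have h2' : c = a * b * a⁻¹ * b⁻¹ := by rw [hc, commutatorElement_def]
      rw [h2']
      exact N.mul_mem h1 (N.inv_mem hbN)
    have hca : c * a = a * c := h2 M hMco.1 c hcM a haM
    have hcb : c * b = b * c := h2 N hNco.1 c hcN b hbN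
    have hcZ : ∀ g : G, c * g = g * c := by
      intro g
      have hsub : Subgroup.closure {a, b} ≤ Subgroup.centralizer {c} := by
        rw [Subgroup.closure_le]
        intro w hw
        simp only [Set.mem_insert_iff, Set.mem_singleton_iff] at hw
        rw [SetLike.mem_coe, Subgroup.mem_centralizer_iff]
        rintro h hh
        rw [Set.mem_singleton_iff] at hh
        subst hh
        rcases hw with rfl | rfl
        · exact hca
        · exact hcb
      have hg : g ∈ Subgroup.centralizer {c} := hsub (hgen ▸ Subgroup.mem_top g)
      exact Subgroup.mem_centralizer_iff.mp hg c (Set.mem_singleton c)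
    have hc1 : c ≠ 1 := by
      intro h
      exact hab (commutatorElement_eq_one_iff_commute.mp (hc ▸ h)).eq
    have hapN : a ^ p ∈ N := by
      have h1 := Subgroup.pow_index_mem N a
      rwa [hNidx] at h1
    have hba : b * a ^ p = a ^ p * b :=
      Subgroup.mem_centralizer_iff.mp hapN b (Set.mem_singleton b)
    have hconj : a * b * a⁻¹ = c * b := by
      rw [hc, commutatorElement_def, inv_mul_cancel_right]
    have hcp : c ^ p = 1 := by
      have hiter := my_conj_pow_eq hcZ hconj p
      have h1 : a ^ p * b * (a ^ p)⁻¹ = b := by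
        rw [← hba, mul_inv_cancel_right]
      rw [h1] at hiter
      have h2' : c ^ p * b = 1 * b := by rw [one_mul, ← hiter]
      exact mul_right_cancel h2'
    have hop : orderOf c = p := orderOf_eq_prime hcp hc1
    haveI hzn : (Subgroup.zpowers c).Normal := my_normal_of_le_center
      (Subgroup.zpowers_le.mpr (Subgroup.mem_center_iff.mpr (fun g => (hcZ g).symm)))
    have hnle : commutator G ≤ Subgroup.zpowers c := by
      rw [_root_.commutator_def, Subgroup.commutator_le]
      intro g _ h _
      exact my_quotient_comm hgen (Subgroup.mem_zpowers c) g h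
    have hcmem : c ∈ commutator G := by
      rw [_root_.commutator_def]
      exact Subgroup.commutator_mem_commutator (Subgroup.mem_top a) (Subgroup.mem_top b)
    have hge : Subgroup.zpowers c ≤ commutator G := Subgroup.zpowers_le.mpr hcmem
    have heq : commutator G = Subgroup.zpowers c := le_antisymm hnle hge
    rw [heq, Nat.card_zpowers, hop]
  · rintro ⟨⟨a, b, hgen⟩, hcard⟩
    have hnontriv : commutator G ≠ ⊥ := by
      intro h
      rw [h, Subgroup.card_bot] at hcard
      exact hp.one_lt.ne' hcard.symm
    constructor
    · intro hall
      apply hnontriv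
      rw [eq_bot_iff, _root_.commutator_def, Subgroup.commutator_le]
      intro g _ h _
      rw [Subgroup.mem_bot]
      exact commutatorElement_eq_one_iff_commute.mpr (hall g h)
    · intro H hH x hx y hy
      by_contra hxy
      set c := ⁅x, y⁆ with hcdef
      have hc1 : c ≠ 1 := by
        intro h
        exact hxy (commutatorElement_eq_one_iff_commute.mp (hcdef ▸ h)).eq
      have hZle : commutator G ≤ Subgroup.center G := my_commutator_le_center hG hcard
      have hpow : ∀ g : G, g ^ p ∈ Subgroup.center G := my_pow_p_mem_center hG hcard
      have hcmem : c ∈ commutator G := by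
        rw [hcdef, _root_.commutator_def]
        exact Subgroup.commutator_mem_commutator (Subgroup.mem_top x) (Subgroup.mem_top y)
      have hoc : orderOf c = p := by
        have h1 : orderOf c ∣ p := by
          have h2 := orderOf_dvd_natCard (⟨c, hcmem⟩ : commutator G)
          rw [hcard, Subgroup.orderOf_mk] at h2
          exact h2
        exact (hp.eq_one_or_self_of_dvd _ h1).resolve_left
          (by simpa [orderOf_eq_one_iff] using hc1)
      have hzc : Subgroup.zpowers c = commutator G := by
        apply Subgroup.eq_of_le_of_card_ge (Subgroup.zpowers_le.mpr hcmem)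
        rw [hcard, Nat.card_zpowers, hoc]
      -- the subgroup K = G' ⊔ ⟨a^p, b^p⟩
      set K := commutator G ⊔ Subgroup.closure {a ^ p, b ^ p} with hKdef
      have hKle : K ≤ Subgroup.center G := by
        apply sup_le hZle
        rw [Subgroup.closure_le]
        intro w hw
        simp only [Set.mem_insert_iff, Set.mem_singleton_iff] at hw
        rcases hw with rfl | rfl
        · exact hpow a
        · exact hpow b
      haveI hKn : K.Normal := my_normal_of_le_center hKle
      have habK : ⁅a, b⁆ ∈ K := by
        apply Subgroup.mem_sup_left
        rw [_root_.commutator_def]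
        exact Subgroup.commutator_mem_commutator (Subgroup.mem_top a) (Subgroup.mem_top b)
      have hapK : a ^ p ∈ K := Subgroup.mem_sup_right (Subgroup.subset_closure (by simp))
      have hbpK : b ^ p ∈ K := Subgroup.mem_sup_right (Subgroup.subset_closure (by simp))
      have hKidx : K.index ≤ p ^ 2 := my_index_le_sq hp.pos hgen habK hapK hbpK
      set Z := Subgroup.center G with hZdef
      have hZne : Z.index ≠ 0 := Subgroup.index_ne_zero_of_finite
      obtain ⟨n, hn⟩ := IsPGroup.iff_card.mp hG
      have hZdvd : Z.index ∣ p ^ n := hn ▸ Subgroup.index_dvd_card Z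
      obtain ⟨j, hjn, hj⟩ := (Nat.dvd_prime_pow hp).mp hZdvd
      have hnotcyc : ¬ IsCyclic (G ⧸ Z) := by
        intro hcyc
        exact hxy (commutative_of_cyclic_center_quotient (QuotientGroup.mk' Z)
          (by rw [QuotientGroup.ker_mk']) x y)
      have hj2 : 2 ≤ j := by
        by_contra hlt
        push_neg at hlt
        interval_cases j
        · apply hnotcyc
          have hone : Nat.card (G ⧸ Z) = 1 := by
            rw [← Subgroup.index_eq_card, hj, pow_zero]
          haveI : Subsingleton (G ⧸ Z) := (Nat.card_eq_one_iff_unique.mp hone).1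
          infer_instance
        · exact hnotcyc (isCyclic_of_prime_card
            (by rw [← Subgroup.index_eq_card, hj, pow_one]))
      have hZidx_ge : p ^ 2 ≤ Z.index := by
        rw [hj]
        exact Nat.pow_le_pow_right hp.pos hj2
      have hrel := Subgroup.relIndex_mul_index hKle
      have hKne : K.index ≠ 0 := Subgroup.index_ne_zero_of_finite
      have hrel1 : K.relIndex Z = 1 := by
        by_contra hne1
        have h0 : K.relIndex Z ≠ 0 := by
          intro h0
          rw [h0, zero_mul] at hrel
          exact hKne hrel.symm
        have h2' : 2 ≤ K.relIndex Z := by omega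
        have h3' : 2 * Z.index ≤ K.index := by
          rw [← hrel]
          exact Nat.mul_le_mul_right _ h2'
        have hZpos : 0 < Z.index := Nat.pos_of_ne_zero hZne
        omega
      have hZK : Z ≤ K := Subgroup.relIndex_eq_one.mp hrel1
      have hZeqK : Z = K := le_antisymm hZK hKle
      have hZidx : Z.index = p ^ 2 := by
        apply le_antisymm
        · rw [hZeqK]; exact hKidx
        · exact hZidx_ge
      -- maximal subgroup above H
      haveI : Finite (Subgroup G) :=
        Finite.of_injective (fun (L : Subgroup G) => ((L : Set G) : Set G)) SetLike.coe_injective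
      obtain ⟨M, hMco, hHM⟩ := (IsCoatomic.eq_top_or_exists_le_coatom H).resolve_left hH
      haveI hMn : M.Normal := my_coatom_normal hG hMco
      have hMidx : M.index = p := my_coatom_index hG hMco
      have hapM : a ^ p ∈ M := by
        have h1 := Subgroup.pow_index_mem M a
        rwa [hMidx] at h1
      have hbpM : b ^ p ∈ M := by
        have h1 := Subgroup.pow_index_mem M b
        rwa [hMidx] at h1
      have hcH : c ∈ H := by
        rw [hcdef, commutatorElement_def]
        exact H.mul_mem (H.mul_mem (H.mul_mem hx hy) (H.inv_mem hx)) (H.inv_mem hy)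
      have hcommM : commutator G ≤ M := by
        rw [← hzc]
        exact Subgroup.zpowers_le.mpr (hHM hcH)
      have hKM : K ≤ M := by
        apply sup_le hcommM
        rw [Subgroup.closure_le]
        intro w hw
        simp only [Set.mem_insert_iff, Set.mem_singleton_iff] at hw
        rcases hw with rfl | rfl
        · exact hapM
        · exact hbpM
      have hZM : Z ≤ M := hZeqK ▸ hKM
      -- quotient by the center
      set q := QuotientGroup.mk' Z with hq
      set S := Subgroup.closure {q x, q y} with hS
      rcases eq_or_ne S ⊤ with hStop | hSne
      · apply hMco.1
        rw [eq_top_iff]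
        have hle1 : Subgroup.closure {x, y} ⊔ Z ≤ M := by
          apply sup_le _ hZM
          rw [Subgroup.closure_le]
          intro w hw
          simp only [Set.mem_insert_iff, Set.mem_singleton_iff] at hw
          rcases hw with rfl | rfl
          · exact hHM hx
          · exact hHM hy
        have h3' : Subgroup.map q (Subgroup.closure {x, y}) = ⊤ := by
          rw [MonoidHom.map_closure, Set.image_pair]
          exact hStop
        have h4' := Subgroup.comap_map_eq q (Subgroup.closure {x, y})
        rw [h3', Subgroup.comap_top, hq, QuotientGroup.ker_mk'] at h4'
        rw [h4']
        exact hle1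
      · have hcardS : Nat.card S ∣ p ^ 2 := by
          have h1 : Nat.card S ∣ Nat.card (G ⧸ Z) := Subgroup.card_subgroup_dvd_card S
          rwa [← Subgroup.index_eq_card, hZidx] at h1
        obtain ⟨m, hm2, hmS⟩ := (Nat.dvd_prime_pow hp).mp hcardS
        have hm1 : m ≤ 1 := by
          by_contra hmgt
          have hm2' : m = 2 := by omega
          apply hSne
          apply Subgroup.eq_top_of_card_eq
          rw [hmS, hm2', ← hZidx, Subgroup.index_eq_card]
        haveI hcyc : IsCyclic S := by
          interval_cases m
          · have h1 : Nat.card S = 1 := by simpa using hmS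
            haveI : Subsingleton S := (Nat.card_eq_one_iff_unique.mp h1).1
            infer_instance
          · exact isCyclic_of_prime_card (by simpa using hmS)
        obtain ⟨g₀, hg₀⟩ := IsCyclic.exists_generator (α := S)
        have hxS : q x ∈ S := Subgroup.subset_closure (by simp)
        have hyS : q y ∈ S := Subgroup.subset_closure (by simp)
        obtain ⟨i, hi⟩ := Subgroup.mem_zpowers_iff.mp (hg₀ ⟨q x, hxS⟩)
        obtain ⟨j, hj'⟩ := Subgroup.mem_zpowers_iff.mp (hg₀ ⟨q y, hyS⟩)
        have hi' : ((g₀ : G ⧸ Z)) ^ i = q x := by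
          have := congrArg (Subtype.val) hi
          simpa using this
        have hj'' : ((g₀ : G ⧸ Z)) ^ j = q y := by
          have := congrArg (Subtype.val) hj'
          simpa using this
        obtain ⟨g, hg⟩ := QuotientGroup.mk'_surjective Z (g₀ : G ⧸ Z)
        have hqgi : q (g ^ i) = q x := by rw [map_zpow, hg, hi']
        have hqgj : q (g ^ j) = q y := by rw [map_zpow, hg, hj'']
        have hxg : x * (g ^ i)⁻¹ ∈ Z := by
          have h1 : q (x * (g ^ i)⁻¹) = 1 := by
            rw [map_mul, map_inv, hqgi]
            simp
          have h2' : x * (g ^ i)⁻¹ ∈ q.ker := MonoidHom.mem_ker.mpr h1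
          rwa [hq, QuotientGroup.ker_mk'] at h2'
        have hyg : y * (g ^ j)⁻¹ ∈ Z := by
          have h1 : q (y * (g ^ j)⁻¹) = 1 := by
            rw [map_mul, map_inv, hqgj]
            simp
          have h2' : y * (g ^ j)⁻¹ ∈ q.ker := MonoidHom.mem_ker.mpr h1
          rwa [hq, QuotientGroup.ker_mk'] at h2'
        set z := x * (g ^ i)⁻¹ with hz
        set w := y * (g ^ j)⁻¹ with hw
        have hxz : x = z * g ^ i := by rw [hz]; group
        have hyw : y = w * g ^ j := by rw [hw]; group
        have hzc' := Subgroup.mem_center_iff.mp hxg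
        have hwc' := Subgroup.mem_center_iff.mp hyg
        apply hxy
        rw [hxz, hyw]
        have hgw : g ^ j * z = z * g ^ j := hzc' (g ^ j)
        have hgz : g ^ i * w = w * g ^ i := hwc' (g ^ i)
        have hwz : z * w = w * z := hwc' z
        calc z * g ^ i * (w * g ^ j)
            = z * (g ^ i * w) * g ^ j := by group
          _ = z * (w * g ^ i) * g ^ j := by rw [hgz]
          _ = z * w * (g ^ i * g ^ j) := by group
          _ = w * z * (g ^ j * g ^ i) := by
              rw [hwz, ← zpow_add, ← zpow_add, add_comm]
          _ = w * (g ^ j * z) * g ^ i := by rw [hgw]; group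
          _ = w * g ^ j * (z * g ^ i) := by group
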